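/- arXiv:1804.08984 — 3 statements merged into one kernel-verified Lean document; each statement's English description precedes it below -/
import Mathlib

section
/- Let (Ω, 𝓕, P) be a probability space with a filtration (𝓕ₙ)ₙ∈ℕ, let d ≥ 1, and let S ⊆ ℝ^d be a measurable set (the loop-guard set). Let (xₙ)ₙ∈ℕ be an (𝓕ₙ)-adapted process with values in ℝ^d with x₀ = v almost surely for a fixed v ∈ S, and let (Cₙ)ₙ∈ℕ be real-valued random variables such that Cₙ is 𝓕ₙ₊₁-measurable for each n. Let T := inf { n : xₙ ∉ S } and assume T < ∞ almost surely and E[T] < ∞. Let h : ℝ^d → ℝ be affine, i.e. h(w) = aᵀw + b for fixed a ∈ ℝ^d, b ∈ ℝ. Assume: (i) almost surely on the event {xₙ ∉ S} one has xₙ₊₁ = xₙ and Cₙ = 0; (ii) almost surely on the event {xₙ ∈ S} one has E[h(xₙ₊₁) + Cₙ | 𝓕ₙ] ≤ h(xₙ); (iii) there is a constant M ≥ 0 with |h(xₙ₊₁) − h(xₙ)| ≤ M almost surely for all n; (iv) there is a constant R_max ≥ 0 with |Cₙ| ≤ R_max almost surely for all n; (v) there is a constant K with h(x_T) ≥ K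 almost surely. Then the accumulated cost C_∞ := Σₙ₌₀^∞ Cₙ is integrable and E[C_∞] ≤ h(v) − K. -/
open MeasureTheory Filter
open scoped ENNReal Topology

/-- **Upper bounds via Linear Upper Potential Functions (LUPFs).**
If `h` is an affine potential function that conditionally decreases (plus the step cost)
inside the loop-guard set `S`, has bounded differences along the process, and is bounded
below by `K` at the termination time `T` (which has finite expectation), then the
accumulated cost `C_∞ = ∑ₙ Cₙ` is integrable and `E[C_∞] ≤ h(v) − K`. -/
theorem lupf_upper_bound
    {Ω : Type*} {m0 : MeasurableSpace Ω} (P : Measure Ω) [IsProbabilityMeasure P]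
    (ℱ : Filtration ℕ m0)
    (d : ℕ) (hd : 1 ≤ d)
    (S : Set (Fin d → ℝ)) (hS : MeasurableSet S)
    (x : ℕ → Ω → (Fin d → ℝ)) (hx : Adapted ℱ x)
    (v : Fin d → ℝ) (hv : v ∈ S) (hx0 : ∀ᵐ ω ∂P, x 0 ω = v)
    (C : ℕ → Ω → ℝ) (hCmeas : ∀ n, StronglyMeasurable[ℱ (n + 1)] (C n))
    (T : Ω → ℕ) (hT : ∀ ω, T ω = sInf {n | x n ω ∉ S})
    (hTfin : ∀ᵐ ω ∂P, ∃ n, x n ω ∉ S)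
    (hTint : Integrable (fun ω => (T ω : ℝ)) P)
    (h : (Fin d → ℝ) → ℝ) (a : Fin d → ℝ) (b : ℝ)
    (haff : ∀ w, h w = (∑ i, a i * w i) + b)
    (hfreeze : ∀ n, ∀ᵐ ω ∂P, x n ω ∉ S → x (n + 1) ω = x n ω ∧ C n ω = 0)
    (hdecr : ∀ n, ∀ᵐ ω ∂P, x n ω ∈ S →
      (P[fun ω' => h (x (n + 1) ω') + C n ω' | ℱ n]) ω ≤ h (x n ω))
    (M : ℝ) (hM : 0 ≤ M)
    (hbd : ∀ n, ∀ᵐ ω ∂P, |h (x (n + 1) ω) - h (x n ω)| ≤ M)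
    (Rmax : ℝ) (hR : 0 ≤ Rmax)
    (hCbd : ∀ n, ∀ᵐ ω ∂P, |C n ω| ≤ Rmax)
    (K : ℝ) (hK : ∀ᵐ ω ∂P, K ≤ h (x (T ω) ω)) :
    Integrable (fun ω => ∑' n, C n ω) P ∧
      ∫ ω, (∑' n, C n ω) ∂P ≤ h v - K := by
  classical
  -- `h` is continuous
  have hcont : Continuous h := by
    have hh : h = fun w => (∑ i, a i * w i) + b := funext haff
    rw [hh]
    exact (continuous_finset_sum _ fun i _ =>
      continuous_const.mul (continuous_apply i)).add continuous_const
  have hxm : ∀ n, Measurable (x n) := fun n => (hx n).mono (ℱ.le n) le_rfl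
  have hhx : ∀ n, StronglyMeasurable[ℱ n] (fun ω => h (x n ω)) := fun n =>
    hcont.comp_stronglyMeasurable (hx n).stronglyMeasurable
  -- the potential process
  set g : ℕ → Ω → ℝ := fun n ω => h (x n ω) + ∑ k ∈ Finset.range n, C k ω with hg
  have hgadapt : StronglyAdapted ℱ g := by
    intro n
    exact (hhx n).add (Finset.stronglyMeasurable_fun_sum _ fun k hk =>
      (hCmeas k).mono (ℱ.mono (Finset.mem_range.mp hk)))
  have hgm : ∀ n, StronglyMeasurable (g n) := fun n => (hgadapt n).mono (ℱ.le n)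
  -- a.e. bounds on `h (x n)`
  have hhb : ∀ᵐ ω ∂P, ∀ n, |h (x n ω) - h v| ≤ n * M := by
    filter_upwards [hx0, ae_all_iff.mpr hbd] with ω h0 hb
    intro n
    induction n with
    | zero => simp [h0]
    | succ n ih =>
      have h1 := hb n
      have h2 := abs_sub_le (h (x (n + 1) ω)) (h (x n ω)) (h v)
      push_cast
      nlinarith
  have hCb : ∀ᵐ ω ∂P, ∀ n, |C n ω| ≤ Rmax := ae_all_iff.mpr hCbd
  -- a.e. bound on g
  have hgb : ∀ᵐ ω ∂P, ∀ n, |g n ω| ≤ |h v| + n * (M + Rmax) := by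
    filter_upwards [hhb, hCb] with ω h1 h2
    intro n
    have hs : |∑ k ∈ Finset.range n, C k ω| ≤ n * Rmax := by
      calc |∑ k ∈ Finset.range n, C k ω| ≤ ∑ k ∈ Finset.range n, |C k ω| :=
            Finset.abs_sum_le_sum_abs _ _
        _ ≤ ∑ _k ∈ Finset.range n, Rmax := Finset.sum_le_sum fun k _ => h2 k
        _ = n * Rmax := by simp [mul_comm]
    have h3 := h1 n
    have h4 := abs_abs (h (x n ω))
    have : |h (x n ω)| ≤ |h v| + n * M := by
      have := abs_sub_abs_le_abs_sub (h (x n ω)) (h v)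
      linarith
    calc |g n ω| ≤ |h (x n ω)| + |∑ k ∈ Finset.range n, C k ω| := abs_add_le _ _
      _ ≤ (|h v| + n * M) + n * Rmax := add_le_add this hs
      _ = |h v| + n * (M + Rmax) := by ring
  have hgint : ∀ n, Integrable (g n) P := by
    intro n
    refine Integrable.mono' (integrable_const (|h v| + n * (M + Rmax)))
      (hgm n).aestronglyMeasurable ?_
    filter_upwards [hgb] with ω hω using by simpa [Real.norm_eq_abs] using hω n
  have hCint : ∀ n, Integrable (C n) P := by
    intro n
    refine Integrable.mono' (integrable_const Rmax)
      ((hCmeas n).mono (ℱ.le (n + 1))).aestronglyMeasurable ?_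
    filter_upwards [hCbd n] with ω hω using by simpa [Real.norm_eq_abs] using hω
  have hhxint : ∀ n, Integrable (fun ω => h (x n ω)) P := by
    intro n
    refine Integrable.mono' (integrable_const (|h v| + n * M))
      ((hhx n).mono (ℱ.le n)).aestronglyMeasurable ?_
    filter_upwards [hhb] with ω hω
    have := hω n
    have h2 := abs_sub_abs_le_abs_sub (h (x n ω)) (h v)
    rw [Real.norm_eq_abs]
    linarith
  have hsint : ∀ n, Integrable (fun ω => ∑ k ∈ Finset.range n, C k ω) P := fun n =>
    integrable_finset_sum _ fun k _ => hCint k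
  -- g is a supermartingale
  have hsuper : Supermartingale g ℱ P := by
    refine supermartingale_nat hgadapt hgint fun n => ?_
    set f : Ω → ℝ := fun ω => h (x (n + 1) ω) + C n ω with hf
    have hfint : Integrable f P := (hhxint (n + 1)).add (hCint n)
    have hsm : StronglyMeasurable[ℱ n] (fun ω => ∑ k ∈ Finset.range n, C k ω) :=
      Finset.stronglyMeasurable_fun_sum _ fun k hk =>
        (hCmeas k).mono (ℱ.mono (Finset.mem_range.mp hk))
    have h1 : g (n + 1) = f + fun ω => ∑ k ∈ Finset.range n, C k ω := by
      funext ω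
      simp only [hg, hf, Pi.add_apply, Finset.sum_range_succ]
      ring
    set B : Set Ω := (x n) ⁻¹' S with hB
    have hBm : MeasurableSet[ℱ n] B := hx n hS
    set φ : Ω → ℝ := fun ω => h (x n ω) with hφ
    have hfe : f =ᵐ[P] B.indicator f + Bᶜ.indicator φ := by
      filter_upwards [hfreeze n] with ω hfr
      by_cases hω : ω ∈ B
      · simp [Set.indicator_of_mem hω, Set.indicator_of_notMem (by simpa using hω :
          ω ∉ Bᶜ)]
      · have hns : x n ω ∉ S := hω
        obtain ⟨he1, he2⟩ := hfr hns
        simp [Set.indicator_of_notMem hω, Set.indicator_of_mem (Set.mem_compl hω),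
          hf, hφ, he1, he2]
    have hkey : P[f|ℱ n] ≤ᵐ[P] φ := by
      have e1 : P[f|ℱ n] =ᵐ[P] P[B.indicator f + Bᶜ.indicator φ|ℱ n] := condExp_congr_ae hfe
      have hBi : Integrable (B.indicator f) P := hfint.indicator ((ℱ.le n) _ hBm)
      have hφint : Integrable φ P := hhxint n
      have hBci : Integrable (Bᶜ.indicator φ) P := hφint.indicator ((ℱ.le n) _ hBm.compl)
      have e2 : P[B.indicator f + Bᶜ.indicator φ|ℱ n]
          =ᵐ[P] P[B.indicator f|ℱ n] + P[Bᶜ.indicator φ|ℱ n] := condExp_add hBi hBci _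
      have e3 : P[B.indicator f|ℱ n] =ᵐ[P] B.indicator (P[f|ℱ n]) := condExp_indicator hfint hBm
      have e4 : P[Bᶜ.indicator φ|ℱ n] = Bᶜ.indicator φ :=
        condExp_of_stronglyMeasurable (ℱ.le n) ((hhx n).indicator hBm.compl) hBci
      filter_upwards [e1, e2, e3, hdecr n] with ω w1 w2 w3 w4
      rw [w1, w2, e4, Pi.add_apply, w3]
      by_cases hω : ω ∈ B
      · rw [Set.indicator_of_mem hω, Set.indicator_of_notMem (by simpa using hω :
          ω ∉ Bᶜ), add_zero]
        exact w4 hω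
      · rw [Set.indicator_of_notMem hω, Set.indicator_of_mem (Set.mem_compl hω), zero_add]
    -- conclude the supermartingale step
    have e5 : P[g (n + 1)|ℱ n]
        =ᵐ[P] P[f|ℱ n] + fun ω => ∑ k ∈ Finset.range n, C k ω := by
      rw [h1]
      refine (condExp_add hfint (hsint n) _).trans ?_
      rw [condExp_of_stronglyMeasurable (ℱ.le n) hsm (hsint n)]
    filter_upwards [e5, hkey] with ω w5 wk
    rw [w5, Pi.add_apply]
    have : g n ω = φ ω + ∑ k ∈ Finset.range n, C k ω := rfl
    rw [this]
    exact add_le_add_left wk _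
  -- stopping times
  have hτst : ∀ n, IsStoppingTime ℱ (fun ω => ((hittingBtwn x Sᶜ 0 n ω : ℕ) : WithTop ℕ)) := fun n =>
    hittingBtwn_isStoppingTime hx hS.compl
  have hτbdd : ∀ n, ∀ ω, hittingBtwn x Sᶜ 0 n ω ≤ n := fun n ω => hittingBtwn_le ω
  have hkeyint : ∀ n, ∫ ω, stoppedValue g (fun ω => ((hittingBtwn x Sᶜ 0 n ω : ℕ) : WithTop ℕ)) ω ∂P ≤ ∫ ω, g 0 ω ∂P := by
    intro n
    have hsub := hsuper.neg
    have hmono := hsub.expected_stoppedValue_mono (isStoppingTime_const ℱ 0) (hτst n)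
      (fun ω => WithTop.coe_le_coe.mpr (Nat.zero_le _))
      (fun ω => WithTop.coe_le_coe.mpr (hτbdd n ω))
    have e1 : stoppedValue (-g) (fun _ => (WithTop.some (0 : ℕ))) = fun ω => -(g 0 ω) := rfl
    have e2 : stoppedValue (-g) (fun ω => ((hittingBtwn x Sᶜ 0 n ω : ℕ) : WithTop ℕ))
        = fun ω => -(stoppedValue g (fun ω => ((hittingBtwn x Sᶜ 0 n ω : ℕ) : WithTop ℕ)) ω) := rfl
    rw [e1, e2, integral_neg, integral_neg] at hmono
    linarith
  have hg0 : ∫ ω, g 0 ω ∂P = h v := by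
    have he : (fun ω => g 0 ω) =ᵐ[P] fun _ => h v := by
      filter_upwards [hx0] with ω h0
      simp [hg, h0]
    rw [integral_congr_ae he]
    simp
  -- measurability of T
  have hTmeas : Measurable T := by
    apply measurable_to_countable'
    intro k
    match k with
    | 0 =>
      have hset : T ⁻¹' {0} = {ω | x 0 ω ∉ S} ∪ ⋂ j, {ω | x j ω ∈ S} := by
        ext ω
        simp only [Set.mem_preimage, Set.mem_singleton_iff, hT ω, Nat.sInf_eq_zero,
          Set.mem_union, Set.mem_setOf_eq, Set.mem_iInter]
        constructor
        · rintro (h0 | hemp)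
          · exact Or.inl h0
          · refine Or.inr fun j => ?_
            by_contra hj
            have : j ∈ {n | x n ω ∉ S} := hj
            rw [hemp] at this
            exact this
        · rintro (h0 | hall)
          · exact Or.inl h0
          · refine Or.inr ?_
            ext j
            simp [hall j]
      rw [hset]
      exact ((hxm 0 hS).compl).union (MeasurableSet.iInter fun j => hxm j hS)
    | Nat.succ k =>
      have hset : T ⁻¹' {k + 1}
          = {ω | x (k + 1) ω ∉ S} ∩ ⋂ j ∈ Set.Iic k, {ω | x j ω ∈ S} := by
        ext ω
        simp only [Set.mem_preimage, Set.mem_singleton_iff, hT ω, Set.mem_inter_iff,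
          Set.mem_setOf_eq, Set.mem_iInter, Set.mem_Iic]
        constructor
        · intro hk
          have hne : {n | x n ω ∉ S}.Nonempty := by
            by_contra hemp
            rw [Set.not_nonempty_iff_eq_empty] at hemp
            rw [hemp, Nat.sInf_empty] at hk
            omega
          have hmem := Nat.sInf_mem hne
          rw [hk] at hmem
          refine ⟨hmem, fun j hj => ?_⟩
          by_contra hjS
          have := Nat.sInf_le (show j ∈ {n | x n ω ∉ S} from hjS)
          omega
        · rintro ⟨hk1, hall⟩
          refine le_antisymm (Nat.sInf_le hk1) ?_
          by_contra hlt
          push_neg at hlt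
          have hmem := Nat.sInf_mem (⟨k + 1, hk1⟩ : {n | x n ω ∉ S}.Nonempty)
          exact hmem (hall _ (Nat.lt_succ_iff.mp hlt))
      rw [hset]
      exact ((hxm (k + 1) hS).compl).inter
        (MeasurableSet.iInter fun j => MeasurableSet.iInter fun _ => hxm j hS)
  -- measurable auxiliary functions via the countable product trick
  have hgprod : Measurable (fun p : Ω × ℕ => g p.2 p.1) :=
    measurable_from_prod_countable_left fun k => (hgm k).measurable
  have hFmeas : ∀ n : ℕ, Measurable (fun ω => g (min (T ω) n) ω) := fun n =>
    hgprod.comp (measurable_id.prodMk (hTmeas.min measurable_const))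
  have hGmeas : Measurable (fun ω => g (T ω) ω) :=
    hgprod.comp (measurable_id.prodMk hTmeas)
  have hxTmeas : Measurable (fun ω => h (x (T ω) ω)) := by
    have : Measurable (fun p : Ω × ℕ => h (x p.2 p.1)) :=
      measurable_from_prod_countable_left fun k => hcont.measurable.comp (hxm k)
    exact this.comp (measurable_id.prodMk hTmeas)
  -- the big pointwise a.e. event
  have hae : ∀ᵐ ω ∂P, (x 0 ω = v) ∧ (∀ n, x n ω ∉ S → x (n + 1) ω = x n ω ∧ C n ω = 0)
      ∧ (∀ n, |h (x (n + 1) ω) - h (x n ω)| ≤ M) ∧ (∀ n, |C n ω| ≤ Rmax)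
      ∧ (∃ n, x n ω ∉ S) := by
    filter_upwards [hx0, ae_all_iff.mpr hfreeze, ae_all_iff.mpr hbd, hCb, hTfin] with
      ω a1 a2 a3 a4 a5 using ⟨a1, a2, a3, a4, a5⟩
  -- pointwise consequences on the a.e. event
  have hptwise : ∀ᵐ ω ∂P,
      (∀ n, hittingBtwn x Sᶜ 0 n ω = min (T ω) n)
      ∧ (∑' k, C k ω = ∑ k ∈ Finset.range (T ω), C k ω)
      ∧ (∀ m, |g m ω - h v| ≤ m * (M + Rmax)) := by
    filter_upwards [hae] with ω hω
    obtain ⟨h0, hfr, hbd', hCb', hne'⟩ := hω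
    have hne : {n | x n ω ∉ S}.Nonempty := hne'
    have hTmem : x (T ω) ω ∉ S := by
      rw [hT]; exact Nat.sInf_mem hne
    have hfrozen : ∀ k, T ω ≤ k → x k ω ∉ S := by
      intro k hk
      induction k, hk using Nat.le_induction with
      | base => exact hTmem
      | succ k hk ih =>
        rw [(hfr k ih).1]
        exact ih
    have hCzero : ∀ k, T ω ≤ k → C k ω = 0 := fun k hk => (hfr k (hfrozen k hk)).2
    refine ⟨?_, ?_, ?_⟩
    · intro n
      rcases le_or_gt (T ω) n with hn | hn
      · have hex : ∃ j ∈ Set.Icc 0 n, x j ω ∈ Sᶜ :=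
          ⟨T ω, ⟨Nat.zero_le _, hn⟩, hTmem⟩
        rw [hittingBtwn, if_pos hex, min_eq_left hn]
        have hA : ({i | x i ω ∈ Sᶜ} : Set ℕ) = {n | x n ω ∉ S} := rfl
        refine le_antisymm (Nat.sInf_le ⟨⟨Nat.zero_le _, hn⟩, hTmem⟩) ?_
        have hmem := Nat.sInf_mem (⟨T ω, ⟨Nat.zero_le _, hn⟩, hTmem⟩ :
          (Set.Icc 0 n ∩ {i | x i ω ∈ Sᶜ}).Nonempty)
        rw [hT]
        exact Nat.sInf_le hmem.2
      · have hex : ¬ ∃ j ∈ Set.Icc 0 n, x j ω ∈ Sᶜ := by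
          rintro ⟨j, ⟨-, hj⟩, hjs⟩
          have : T ω ≤ j := by rw [hT]; exact Nat.sInf_le hjs
          omega
        rw [hittingBtwn, if_neg hex, min_eq_right hn.le]
    · refine tsum_eq_sum fun k hk => ?_
      exact hCzero k (Nat.le_of_not_lt fun hc => hk (Finset.mem_range.mpr hc))
    · intro m
      induction m with
      | zero => simp [hg, h0]
      | succ m ih =>
        have hd1 := hbd' m
        have hd2 := hCb' m
        have hstep : g (m + 1) ω - g m ω = (h (x (m + 1) ω) - h (x m ω)) + C m ω := by
          simp only [hg, Finset.sum_range_succ]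
          ring
        have habs : |g (m + 1) ω - g m ω| ≤ M + Rmax := by
          rw [hstep]
          calc |(h (x (m + 1) ω) - h (x m ω)) + C m ω|
              ≤ |h (x (m + 1) ω) - h (x m ω)| + |C m ω| := abs_add_le _ _
            _ ≤ M + Rmax := add_le_add hd1 hd2
        have := abs_sub_le (g (m + 1) ω) (g m ω) (h v)
        push_cast
        nlinarith
  -- dominated convergence
  set G : Ω → ℝ := fun ω => g (T ω) ω with hGdef
  have hboundint : Integrable (fun ω => |h v| + (M + Rmax) * (T ω : ℝ)) P :=
    (integrable_const (|h v|)).add (hTint.const_mul (M + Rmax))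
  have hFbound : ∀ n : ℕ, ∀ᵐ ω ∂P,
      ‖g (min (T ω) n) ω‖ ≤ |h v| + (M + Rmax) * (T ω : ℝ) := by
    intro n
    filter_upwards [hptwise] with ω hω
    have h1 := hω.2.2 (min (T ω) n)
    have h2 : ((min (T ω) n : ℕ) : ℝ) ≤ (T ω : ℝ) := by
      exact_mod_cast min_le_left (T ω) n
    have h3 : (0 : ℝ) ≤ M + Rmax := by linarith
    have h4 := mul_le_mul_of_nonneg_right h2 h3
    have h6 := abs_sub_abs_le_abs_sub (g (min (T ω) n) ω) (h v)
    rw [Real.norm_eq_abs]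
    nlinarith
  have hFtend : ∀ᵐ ω ∂P, Tendsto (fun n => g (min (T ω) n) ω) atTop (𝓝 (G ω)) := by
    filter_upwards [hptwise] with ω _
    have : ∀ n ≥ T ω, g (min (T ω) n) ω = G ω := by
      intro n hn
      rw [min_eq_left hn]
    exact tendsto_atTop_of_eventually_const this
  have htendint : Tendsto (fun n => ∫ ω, g (min (T ω) n) ω ∂P) atTop (𝓝 (∫ ω, G ω ∂P)) :=
    tendsto_integral_of_dominated_convergence _
      (fun n => (hFmeas n).aestronglyMeasurable) hboundint hFbound hFtend
  -- each approximating integral is ≤ h v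
  have hFle : ∀ n : ℕ, ∫ ω, g (min (T ω) n) ω ∂P ≤ h v := by
    intro n
    have he : (fun ω => g (min (T ω) n) ω) =ᵐ[P] stoppedValue g (fun ω => ((hittingBtwn x Sᶜ 0 n ω : ℕ) : WithTop ℕ)) := by
      filter_upwards [hptwise] with ω hω
      rw [stoppedValue, (hω.1 n)]
      rfl
    rw [integral_congr_ae he]
    exact (hkeyint n).trans_eq hg0
  have hGle : ∫ ω, G ω ∂P ≤ h v :=
    le_of_tendsto htendint (Eventually.of_forall hFle)
  -- integrability of G and of h(x_T)
  have hGbound : ∀ᵐ ω ∂P, ‖G ω‖ ≤ |h v| + (M + Rmax) * (T ω : ℝ) := by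
    filter_upwards [hptwise] with ω hω
    have h1 := hω.2.2 (T ω)
    show ‖g (T ω) ω‖ ≤ |h v| + (M + Rmax) * (T ω : ℝ)
    have h6 := abs_sub_abs_le_abs_sub (g (T ω) ω) (h v)
    rw [Real.norm_eq_abs]
    nlinarith
  have hGint : Integrable G P :=
    Integrable.mono' hboundint hGmeas.aestronglyMeasurable hGbound
  have hxTint : Integrable (fun ω => h (x (T ω) ω)) P := by
    refine Integrable.mono'
      (show Integrable (fun ω => |h v| + M * (T ω : ℝ)) P from
        (integrable_const (|h v|)).add (hTint.const_mul M))
      hxTmeas.aestronglyMeasurable ?_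
    filter_upwards [hhb] with ω hω
    have h1 := hω (T ω)
    have h2 := abs_sub_abs_le_abs_sub (h (x (T ω) ω)) (h v)
    rw [Real.norm_eq_abs]
    linarith
  -- the tsum is a.e. equal to G - h(x_T)
  have htsum_eq : (fun ω => ∑' k, C k ω) =ᵐ[P] fun ω => G ω - h (x (T ω) ω) := by
    filter_upwards [hptwise] with ω hω
    rw [hω.2.1]
    have : G ω = h (x (T ω) ω) + ∑ k ∈ Finset.range (T ω), C k ω := rfl
    rw [this]
    ring
  have hsumint : Integrable (fun ω => ∑' k, C k ω) P :=
    (hGint.sub hxTint).congr htsum_eq.symm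
  refine ⟨hsumint, ?_⟩
  have hxTK : K ≤ ∫ ω, h (x (T ω) ω) ∂P := by
    have := integral_mono_ae (integrable_const K) hxTint hK
    simpa using this
  calc ∫ ω, (∑' k, C k ω) ∂P = ∫ ω, (G ω - h (x (T ω) ω)) ∂P := integral_congr_ae htsum_eq
    _ = ∫ ω, G ω ∂P - ∫ ω, h (x (T ω) ω) ∂P := integral_sub hGint hxTint
    _ ≤ h v - K := sub_le_sub hGle hxTK
end

section
/- Let (Ω, 𝓕, P) be a probability space with a filtration (𝓕ₙ)ₙ∈ℕ, let d ≥ 1, and let S ⊆ ℝ^d be a measurable set. Let (xₙ)ₙ∈ℕ be an (𝓕ₙ)-adapted ℝ^d-valued process and (Cₙ)ₙ∈ℕ real-valued random variables with Cₙ being 𝓕ₙ₊₁-measurable and integrable. Let h : ℝ^d → ℝ be affine. Assume: (i) almost surely on {xₙ ∉ S}, xₙ₊₁ = xₙ and Cₙ = 0; (ii) almost surely on {xₙ ∈ S}, E[h(xₙ₊₁) + Cₙ | 𝓕ₙ] ≤ h(xₙ); (iii) all h(xₙ) are integrable. Define Yₙ := h(xₙ) + Σ_{m=0}^{n−1} C_m.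 Then (Yₙ)ₙ∈ℕ is a supermartingale with respect to (𝓕ₙ), i.e. each Yₙ is integrable, 𝓕ₙ-measurable, and E[Yₙ₊₁ | 𝓕ₙ] ≤ Yₙ almost surely. -/
open MeasureTheory Filter
open scoped ENNReal

/-- **Supermartingale property of potential plus accumulated cost.**
If the affine potential `h` conditionally decreases (plus the step cost `Cₙ`) inside the
loop-guard set `S`, and the process freezes with zero cost outside `S`, then
`Yₙ = h(xₙ) + ∑_{m<n} C_m` is a supermartingale: each `Yₙ` is integrable,
`𝓕ₙ`-measurable, and `E[Yₙ₊₁ | 𝓕ₙ] ≤ Yₙ` almost surely. -/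
theorem potential_plus_cost_supermartingale
    {Ω : Type*} {m0 : MeasurableSpace Ω} (P : Measure Ω) [IsProbabilityMeasure P]
    (ℱ : Filtration ℕ m0)
    (d : ℕ) (hd : 1 ≤ d)
    (S : Set (Fin d → ℝ)) (hS : MeasurableSet S)
    (x : ℕ → Ω → (Fin d → ℝ)) (hx : Adapted ℱ x)
    (C : ℕ → Ω → ℝ) (hCmeas : ∀ n, StronglyMeasurable[ℱ (n + 1)] (C n))
    (hCint : ∀ n, Integrable (C n) P)
    (h : (Fin d → ℝ) → ℝ) (a : Fin d → ℝ) (b : ℝ)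
    (haff : ∀ w, h w = (∑ i, a i * w i) + b)
    (hfreeze : ∀ n, ∀ᵐ ω ∂P, x n ω ∉ S → x (n + 1) ω = x n ω ∧ C n ω = 0)
    (hdecr : ∀ n, ∀ᵐ ω ∂P, x n ω ∈ S →
      (P[fun ω' => h (x (n + 1) ω') + C n ω' | ℱ n]) ω ≤ h (x n ω))
    (hhint : ∀ n, Integrable (fun ω => h (x n ω)) P)
    (Y : ℕ → Ω → ℝ)
    (hY : ∀ n ω, Y n ω = h (x n ω) + ∑ m ∈ Finset.range n, C m ω) :
    (∀ n, Integrable (Y n) P) ∧ (∀ n, StronglyMeasurable[ℱ n] (Y n)) ∧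
      (∀ n, ∀ᵐ ω ∂P, (P[Y (n + 1) | ℱ n]) ω ≤ Y n ω) := by
  have hcont : Continuous h := by
    have : h = fun w => (∑ i, a i * w i) + b := funext haff
    rw [this]
    exact (continuous_finset_sum _ fun i _ =>
      (continuous_const.mul (continuous_apply i))).add continuous_const
  -- measurability of h ∘ x n w.r.t. ℱ n
  have hhx : ∀ n, StronglyMeasurable[ℱ n] (fun ω => h (x n ω)) :=
    fun n => (hcont.measurable.comp (hx n)).stronglyMeasurable
  -- measurability of partial sums w.r.t. ℱ n
  have hsum_meas : ∀ n, StronglyMeasurable[ℱ n]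
      (fun ω => ∑ m ∈ Finset.range n, C m ω) := by
    intro n
    apply Finset.stronglyMeasurable_fun_sum
    intro m hm
    exact (hCmeas m).mono (ℱ.mono (Finset.mem_range.mp hm))
  have hsum_int : ∀ n, Integrable (fun ω => ∑ m ∈ Finset.range n, C m ω) P := by
    intro n
    exact integrable_finset_sum _ fun m _ => hCint m
  have hYmeas : ∀ n, StronglyMeasurable[ℱ n] (Y n) := by
    intro n
    have : Y n = fun ω => h (x n ω) + ∑ m ∈ Finset.range n, C m ω := funext (hY n)
    rw [this]
    exact (hhx n).add (hsum_meas n)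
  have hYint : ∀ n, Integrable (Y n) P := by
    intro n
    have : Y n = fun ω => h (x n ω) + ∑ m ∈ Finset.range n, C m ω := funext (hY n)
    rw [this]
    exact (hhint n).add (hsum_int n)
  refine ⟨hYint, hYmeas, ?_⟩
  intro n
  set f : Ω → ℝ := fun ω => h (x (n + 1) ω) + C n ω with hf_def
  have hfint : Integrable f P := (hhint (n + 1)).add (hCint n)
  set A : Set Ω := {ω | x n ω ∈ S} with hA_def
  have hA : MeasurableSet[ℱ n] A := (hx n) hS
  -- a.e. identity: f = h(x n) + 1_A (f - h(x n))
  have hkey : f =ᵐ[P] fun ω => h (x n ω) +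
      A.indicator (fun ω => f ω - h (x n ω)) ω := by
    filter_upwards [hfreeze n] with ω hω
    by_cases hmem : x n ω ∈ S
    · rw [Set.indicator_of_mem (show ω ∈ A from hmem)]; ring
    · obtain ⟨hx', hC'⟩ := hω hmem
      rw [Set.indicator_of_notMem (show ω ∉ A from hmem), hf_def]
      simp [hx', hC']
  -- conditional expectation of f
  have hce : P[f | ℱ n] =ᵐ[P] fun ω => h (x n ω) +
      A.indicator (fun ω => (P[f | ℱ n]) ω - h (x n ω)) ω := by
    have h1 : P[f | ℱ n] =ᵐ[P]
        P[(fun ω => h (x n ω)) + A.indicator (fun ω => f ω - h (x n ω)) | ℱ n] := by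
      refine condExp_congr_ae ?_
      filter_upwards [hkey] with ω hω
      simpa using hω
    have h2 : P[(fun ω => h (x n ω)) + A.indicator (fun ω => f ω - h (x n ω)) | ℱ n]
        =ᵐ[P] P[(fun ω => h (x n ω)) | ℱ n] +
          P[A.indicator (fun ω => f ω - h (x n ω)) | ℱ n] :=
      condExp_add (hhint n) ((hfint.sub (hhint n)).indicator (ℱ.le n _ hA)) _
    have h3 : P[(fun ω => h (x n ω)) | ℱ n] = fun ω => h (x n ω) :=
      condExp_of_stronglyMeasurable (ℱ.le n) (hhx n) (hhint n)
    have h4 : P[A.indicator (fun ω => f ω - h (x n ω)) | ℱ n]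
        =ᵐ[P] A.indicator (P[fun ω => f ω - h (x n ω) | ℱ n]) :=
      condExp_indicator (hfint.sub (hhint n)) hA
    have h5 : P[fun ω => f ω - h (x n ω) | ℱ n]
        =ᵐ[P] fun ω => (P[f | ℱ n]) ω - h (x n ω) := by
      have := condExp_sub (μ := P) (m := ℱ n) hfint (hhint n)
      refine this.trans ?_
      have h6 : P[(fun ω => h (x n ω)) | ℱ n] = fun ω => h (x n ω) :=
        condExp_of_stronglyMeasurable (ℱ.le n) (hhx n) (hhint n)
      filter_upwards with ω
      simp [Pi.sub_apply, h6]
    filter_upwards [h1, h2, h4, h5] with ω e1 e2 e4 e5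
    rw [e1, e2]
    simp only [Pi.add_apply, h3]
    rw [e4]
    by_cases hm : ω ∈ A
    · rw [Set.indicator_of_mem hm, Set.indicator_of_mem hm, e5]
    · rw [Set.indicator_of_notMem hm, Set.indicator_of_notMem hm]
  -- hence E[f|ℱn] ≤ h(x n) a.e.
  have hle : ∀ᵐ ω ∂P, (P[f | ℱ n]) ω ≤ h (x n ω) := by
    filter_upwards [hce, hdecr n] with ω e1 e2
    rw [e1]
    by_cases hmem : ω ∈ A
    · rw [Set.indicator_of_mem hmem]
      have := e2 hmem
      linarith
    · rw [Set.indicator_of_notMem hmem]; simp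
  -- Y (n+1) = f + partial sum up to n
  have hYsucc : Y (n + 1) = f + fun ω => ∑ m ∈ Finset.range n, C m ω := by
    funext ω
    rw [hY (n + 1) ω, Finset.sum_range_succ, Pi.add_apply, hf_def]
    ring
  have hceY : P[Y (n + 1) | ℱ n] =ᵐ[P]
      fun ω => (P[f | ℱ n]) ω + ∑ m ∈ Finset.range n, C m ω := by
    rw [hYsucc]
    have h2 := condExp_add (μ := P) (m := ℱ n) hfint (hsum_int n)
    have h3 : P[(fun ω => ∑ m ∈ Finset.range n, C m ω) | ℱ n]
        = fun ω => ∑ m ∈ Finset.range n, C m ω :=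
      condExp_of_stronglyMeasurable (ℱ.le n) (hsum_meas n) (hsum_int n)
    filter_upwards [h2] with ω e2
    rw [e2, Pi.add_apply, h3]
  filter_upwards [hceY, hle] with ω e1 e2
  rw [e1, hY n ω]
  linarith
end

section
/- Let (Ω, 𝓕, P) be a probability space with a filtration (𝓕ₙ)ₙ∈ℕ, let d ≥ 1, and let S ⊆ ℝ^d be a measurable set (the loop-guard set). Let (xₙ)ₙ∈ℕ be an (𝓕ₙ)-adapted process with values in ℝ^d with x₀ = v almost surely for a fixed v ∈ S, and let (Cₙ)ₙ∈ℕ be real-valued random variables such that Cₙ is 𝓕ₙ₊₁-measurable for each n. Let T := inf { n : xₙ ∉ S } and assume T < ∞ almost surely and E[T] < ∞. Let h : ℝ^d → ℝ be affine, i.e. h(w) = aᵀw + b for fixed a ∈ ℝ^d, b ∈ ℝ. Assume: (i) almost surely on the event {xₙ ∉ S} one has xₙ₊₁ = xₙ and Cₙ = 0; (ii) almost surely on the event {xₙ ∈ S} one has E[h(xₙ₊₁) + Cₙ | 𝓕ₙ] ≥ h(xₙ); (iii) there is a constant M ≥ 0 with |h(xₙ₊₁) − h(xₙ)| ≤ M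 almost surely for all n; (iv) there is a constant R_max ≥ 0 with |Cₙ| ≤ R_max almost surely for all n; (v) there is a constant K' with h(x_T) ≤ K' almost surely. Then the accumulated cost C_∞ := Σₙ₌₀^∞ Cₙ is integrable and E[C_∞] ≥ h(v) − K'. -/
open MeasureTheory Filter
open scoped ENNReal Topology

/-- Auxiliary: a sequence with increments bounded by `c` before time `T` and frozen
after `T` stays within `c * T` of its start. -/
private lemma llpf_aux_abs_bound (T : ℕ) (c : ℝ) (hc : 0 ≤ c) (u : ℕ → ℝ)
    (hstep : ∀ n, |u (n + 1) - u n| ≤ c)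
    (hfr : ∀ n, T ≤ n → u (n + 1) = u n) :
    ∀ n, |u n - u 0| ≤ c * T := by
  have key : ∀ n, |u n - u 0| ≤ c * (min n T : ℕ) := by
    intro n
    induction n with
    | zero => simp
    | succ n ih =>
      rcases le_or_gt T n with hTn | hnT
      · rw [hfr n hTn]
        have hmin : min (n + 1) T = min n T := by omega
        rw [hmin]; exact ih
      · have h1 : min n T = n := by omega
        have h2 : min (n + 1) T = n + 1 := by omega
        rw [h1] at ih
        rw [h2]
        have habs : |u (n + 1) - u 0| ≤ |u (n + 1) - u n| + |u n - u 0| :=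
          abs_sub_le _ _ _
        have := hstep n
        push_cast
        nlinarith
  intro n
  calc |u n - u 0| ≤ c * (min n T : ℕ) := key n
    _ ≤ c * T := by
        apply mul_le_mul_of_nonneg_left _ hc
        exact_mod_cast Nat.cast_le.mpr (min_le_right n T)

/-- **Lower bounds via Linear Lower Potential Functions (LLPFs).**
If `h` is an affine potential function that conditionally increases (plus the step cost)
inside the loop-guard set `S`, has bounded differences along the process, and is bounded
above by `K'` at the termination time `T` (which has finite expectation), then the
accumulated cost `C_∞ = ∑ₙ Cₙ` is integrable and `E[C_∞] ≥ h(v) − K'`. -/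
theorem llpf_lower_bound
    {Ω : Type*} {m0 : MeasurableSpace Ω} (P : Measure Ω) [IsProbabilityMeasure P]
    (ℱ : Filtration ℕ m0)
    (d : ℕ) (hd : 1 ≤ d)
    (S : Set (Fin d → ℝ)) (hS : MeasurableSet S)
    (x : ℕ → Ω → (Fin d → ℝ)) (hx : Adapted ℱ x)
    (v : Fin d → ℝ) (hv : v ∈ S) (hx0 : ∀ᵐ ω ∂P, x 0 ω = v)
    (C : ℕ → Ω → ℝ) (hCmeas : ∀ n, StronglyMeasurable[ℱ (n + 1)] (C n))
    (T : Ω → ℕ) (hT : ∀ ω, T ω = sInf {n | x n ω ∉ S})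
    (hTfin : ∀ᵐ ω ∂P, ∃ n, x n ω ∉ S)
    (hTint : Integrable (fun ω => (T ω : ℝ)) P)
    (h : (Fin d → ℝ) → ℝ) (a : Fin d → ℝ) (b : ℝ)
    (haff : ∀ w, h w = (∑ i, a i * w i) + b)
    (hfreeze : ∀ n, ∀ᵐ ω ∂P, x n ω ∉ S → x (n + 1) ω = x n ω ∧ C n ω = 0)
    (hincr : ∀ n, ∀ᵐ ω ∂P, x n ω ∈ S →
      h (x n ω) ≤ (P[fun ω' => h (x (n + 1) ω') + C n ω' | ℱ n]) ω)
    (M : ℝ) (hM : 0 ≤ M)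
    (hbd : ∀ n, ∀ᵐ ω ∂P, |h (x (n + 1) ω) - h (x n ω)| ≤ M)
    (Rmax : ℝ) (hR : 0 ≤ Rmax)
    (hCbd : ∀ n, ∀ᵐ ω ∂P, |C n ω| ≤ Rmax)
    (K' : ℝ) (hK' : ∀ᵐ ω ∂P, h (x (T ω) ω) ≤ K') :
    Integrable (fun ω => ∑' n, C n ω) P ∧
      h v - K' ≤ ∫ ω, (∑' n, C n ω) ∂P := by
  classical
  -- notation
  set g : ℕ → Ω → ℝ := fun n ω => h (x n ω) with hg
  set D : ℕ → Ω → ℝ := fun n ω => ∑ k ∈ Finset.range n, C k ω with hD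
  -- continuity of h
  have hcont : Continuous h := by
    have hh : h = fun w => (∑ i, a i * w i) + b := funext haff
    rw [hh]
    exact (continuous_finset_sum _ fun i _ =>
      (continuous_const.mul (continuous_apply i))).add continuous_const
  -- measurability
  have hxm : ∀ n, StronglyMeasurable (x n) := fun n => ((hx n).mono (ℱ.le n) le_rfl).stronglyMeasurable
  have hgm : ∀ n, StronglyMeasurable (g n) := fun n =>
    hcont.comp_stronglyMeasurable (hxm n)
  have hCm : ∀ n, StronglyMeasurable (C n) := fun n => (hCmeas n).mono (ℱ.le (n + 1))
  have hDm : ∀ n, StronglyMeasurable (D n) := fun n =>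
    Finset.stronglyMeasurable_fun_sum _ fun k _ => hCm k
  -- before time T we are inside S (pointwise)
  have hin : ∀ ω n, n < T ω → x n ω ∈ S := by
    intro ω n hn
    by_contra hns
    have : T ω ≤ n := by rw [hT]; exact Nat.sInf_le hns
    omega
  -- after time T the process is frozen outside S
  have hstay : ∀ᵐ ω ∂P, ∀ n, T ω ≤ n → x n ω = x (T ω) ω ∧ x n ω ∉ S := by
    filter_upwards [hTfin, ae_all_iff.2 hfreeze] with ω hne hfr
    have hTmem : x (T ω) ω ∉ S := by
      have : T ω ∈ {n | x n ω ∉ S} := by rw [hT]; exact Nat.sInf_mem hne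
      exact this
    intro n hn
    induction n, hn using Nat.le_induction with
    | base => exact ⟨rfl, hTmem⟩
    | succ n hn ih =>
      have h1 := (hfr n ih.2).1
      exact ⟨h1.trans ih.1, h1 ▸ ih.2⟩
  have hCzero : ∀ᵐ ω ∂P, ∀ n, T ω ≤ n → C n ω = 0 := by
    filter_upwards [hstay, ae_all_iff.2 hfreeze] with ω h1 h2 n hn
    exact (h2 n (h1 n hn).2).2
  -- the values of h along the process stay within M * T of h v
  have hgbd : ∀ᵐ ω ∂P, ∀ n, |g n ω - h v| ≤ M * T ω := by
    filter_upwards [hstay, ae_all_iff.2 hbd, ae_all_iff.2 hfreeze, hx0] with ω h1 h2 h3 h0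
    have key := llpf_aux_abs_bound (T ω) M hM (fun n => g n ω)
      (fun n => h2 n)
      (fun n hn => by
        show g (n + 1) ω = g n ω
        have hfr := (h3 n (h1 n hn).2).1
        simp only [hg]
        rw [hfr])
    intro n
    have h00 : g 0 ω = h v := by simp only [hg]; rw [h0]
    simpa [h00] using key n
  -- the partial cost sums stay within Rmax * T of 0
  have hDbd : ∀ᵐ ω ∂P, ∀ n, |D n ω| ≤ Rmax * T ω := by
    filter_upwards [hCzero, ae_all_iff.2 hCbd] with ω h1 h2
    have key := llpf_aux_abs_bound (T ω) Rmax hR (fun n => D n ω)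
      (fun n => by
        show |D (n + 1) ω - D n ω| ≤ Rmax
        have hsucc : D (n + 1) ω - D n ω = C n ω := by
          simp [hD, Finset.sum_range_succ]
        rw [hsucc]; exact h2 n)
      (fun n hn => by
        show D (n + 1) ω = D n ω
        have hsucc : D (n + 1) ω = D n ω + C n ω := by
          simp [hD, Finset.sum_range_succ]
        rw [hsucc, h1 n hn, add_zero])
    intro n
    have h00 : D 0 ω = 0 := by simp [hD]
    simpa [h00] using key n
  -- eventual constancy
  have hgT : ∀ᵐ ω ∂P, ∀ n, T ω ≤ n → g n ω = g (T ω) ω := by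
    filter_upwards [hstay] with ω h1 n hn
    simp only [hg]
    rw [(h1 n hn).1]
  have hDT : ∀ᵐ ω ∂P, ∀ n, T ω ≤ n → D n ω = D (T ω) ω := by
    filter_upwards [hCzero] with ω h1 n hn
    induction n, hn using Nat.le_induction with
    | base => rfl
    | succ n hn ih =>
      have : D (n + 1) ω = D n ω + C n ω := by
        simp [hD, Finset.sum_range_succ]
      rw [this, h1 n hn, add_zero, ih]
  have htsum : ∀ᵐ ω ∂P, (∑' n, C n ω) = D (T ω) ω := by
    filter_upwards [hCzero] with ω h1
    exact tsum_eq_sum (fun n hn => h1 n (by simpa using hn))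
  -- integrability
  have hgint : ∀ n, Integrable (g n) P := by
    intro n
    refine Integrable.mono' (g := fun ω => |h v| + M * T ω)
      ((integrable_const _).add (hTint.const_mul M))
      (hgm n).aestronglyMeasurable ?_
    filter_upwards [hgbd] with ω hb
    have h1 := hb n
    have h2 : |g n ω| - |h v| ≤ |g n ω - h v| := abs_sub_abs_le_abs_sub _ _
    rw [Real.norm_eq_abs]
    linarith
  have hCint : ∀ n, Integrable (C n) P := by
    intro n
    refine Integrable.mono' (g := fun _ => Rmax) (integrable_const _)
      (hCm n).aestronglyMeasurable ?_
    filter_upwards [hCbd n] with ω hb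
    rwa [Real.norm_eq_abs]
  have hDint : ∀ n, Integrable (D n) P := fun n =>
    integrable_finset_sum _ fun k _ => hCint k
  -- the expected potential-plus-cost is nondecreasing
  have hstep : ∀ n, ∫ ω, (g n ω + D n ω) ∂P ≤ ∫ ω, (g (n + 1) ω + D (n + 1) ω) ∂P := by
    intro n
    have hZint : Integrable (fun ω => g (n + 1) ω + C n ω) P := (hgint (n + 1)).add (hCint n)
    set A : Set Ω := {ω | x n ω ∈ S} with hA
    have hAmeas : MeasurableSet[ℱ n] A := (hx n) hS
    have hAm0 : MeasurableSet A := ℱ.le n _ hAmeas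
    have key : ∫ ω, g n ω ∂P ≤ ∫ ω, (g (n + 1) ω + C n ω) ∂P := by
      rw [← integral_add_compl hAm0 (hgint n), ← integral_add_compl hAm0 hZint]
      have h1 : ∫ ω in A, g n ω ∂P ≤ ∫ ω in A, (g (n + 1) ω + C n ω) ∂P := by
        rw [← setIntegral_condExp (ℱ.le n) hZint hAmeas]
        refine setIntegral_mono_ae_restrict (hgint n).integrableOn
          integrable_condExp.integrableOn ?_
        rw [Filter.EventuallyLE, ae_restrict_iff' hAm0]
        filter_upwards [hincr n] with ω hω hmem
        exact hω hmem
      have h2 : ∫ ω in Aᶜ, g n ω ∂P = ∫ ω in Aᶜ, (g (n + 1) ω + C n ω) ∂P := by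
        refine (setIntegral_congr_ae hAm0.compl ?_).symm
        filter_upwards [hfreeze n] with ω hω hmem
        have hf := hω hmem
        simp only [hg]
        rw [hf.1, hf.2, add_zero]
      linarith
    rw [integral_add (hgint n) (hDint n), integral_add (hgint (n + 1)) (hDint (n + 1))]
    have hDsucc : ∫ ω, D (n + 1) ω ∂P = ∫ ω, D n ω ∂P + ∫ ω, C n ω ∂P := by
      have hfun : (fun ω => D (n + 1) ω) = fun ω => D n ω + C n ω := by
        funext ω; simp [hD, Finset.sum_range_succ]
      rw [hfun, integral_add (hDint n) (hCint n)]
    rw [hDsucc]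
    have hZ := integral_add (hgint (n + 1)) (hCint n)
    linarith [key, hZ]
  have hI0 : ∫ ω, (g 0 ω + D 0 ω) ∂P = h v := by
    have heq : (fun ω => g 0 ω + D 0 ω) =ᵐ[P] fun _ => h v := by
      filter_upwards [hx0] with ω h0
      simp [hg, hD, h0]
    rw [integral_congr_ae heq, integral_const]
    simp
  have hvI : ∀ n, h v ≤ ∫ ω, (g n ω + D n ω) ∂P := by
    intro n
    induction n with
    | zero => exact hI0.ge
    | succ n ih => exact ih.trans (hstep n)
  -- limit function
  set YT : Ω → ℝ := fun ω => h (x (T ω) ω) + ∑' k, C k ω with hYT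
  have hlim : ∀ᵐ ω ∂P, Tendsto (fun n => g n ω + D n ω) atTop (𝓝 (YT ω)) := by
    filter_upwards [hgT, hDT, htsum] with ω h1 h2 h3
    refine tendsto_atTop_of_eventually_const (i₀ := T ω) fun n hn => ?_
    rw [h1 n hn, h2 n hn]
    show g (T ω) ω + D (T ω) ω = h (x (T ω) ω) + ∑' k, C k ω
    rw [h3]
  have hbound_int : Integrable (fun ω => |h v| + (M * T ω + Rmax * T ω)) P :=
    (integrable_const _).add ((hTint.const_mul M).add (hTint.const_mul Rmax))
  have hYbd : ∀ n, ∀ᵐ ω ∂P, ‖g n ω + D n ω‖ ≤ |h v| + (M * T ω + Rmax * T ω) := by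
    intro n
    filter_upwards [hgbd, hDbd] with ω h1 h2
    rw [Real.norm_eq_abs]
    have ha := abs_add_le (g n ω) (D n ω)
    have hb := abs_sub_abs_le_abs_sub (g n ω) (h v)
    have h1' := h1 n
    have h2' := h2 n
    linarith
  have htend : Tendsto (fun n => ∫ ω, (g n ω + D n ω) ∂P) atTop (𝓝 (∫ ω, YT ω ∂P)) :=
    tendsto_integral_of_dominated_convergence _
      (fun n => ((hgm n).add (hDm n)).aestronglyMeasurable) hbound_int hYbd hlim
  have hvYT : h v ≤ ∫ ω, YT ω ∂P := ge_of_tendsto' htend hvI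
  -- measurability and integrability of the limit pieces
  have hhTm : AEStronglyMeasurable (fun ω => h (x (T ω) ω)) P := by
    refine aestronglyMeasurable_of_tendsto_ae atTop
      (fun n => (hgm n).aestronglyMeasurable) ?_
    filter_upwards [hgT] with ω h1
    exact tendsto_atTop_of_eventually_const (i₀ := T ω) fun n hn => h1 n hn
  have hhTint : Integrable (fun ω => h (x (T ω) ω)) P := by
    refine Integrable.mono' (g := fun ω => |h v| + M * T ω)
      ((integrable_const _).add (hTint.const_mul M)) hhTm ?_
    filter_upwards [hgbd] with ω hb
    have h1 := hb (T ω)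
    have h2 : |g (T ω) ω| - |h v| ≤ |g (T ω) ω - h v| := abs_sub_abs_le_abs_sub _ _
    rw [Real.norm_eq_abs]
    exact le_trans (by simp only [hg] at h1 h2 ⊢; linarith) le_rfl
  have hYTm : AEStronglyMeasurable YT P := by
    refine aestronglyMeasurable_of_tendsto_ae atTop
      (fun n => ((hgm n).add (hDm n)).aestronglyMeasurable) hlim
  have hYTint : Integrable YT P := by
    refine Integrable.mono' (g := fun ω => |h v| + (M * T ω + Rmax * T ω))
      hbound_int hYTm ?_
    filter_upwards [hgbd, hDbd, htsum] with ω h1 h2 h3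
    rw [Real.norm_eq_abs]
    show |h (x (T ω) ω) + ∑' k, C k ω| ≤ _
    rw [h3]
    have h1' := h1 (T ω)
    have h2' := h2 (T ω)
    have ha := abs_add_le (h (x (T ω) ω)) (D (T ω) ω)
    have hb : |h (x (T ω) ω)| - |h v| ≤ |h (x (T ω) ω) - h v| := abs_sub_abs_le_abs_sub _ _
    simp only [hg] at h1'
    linarith
  -- conclusion
  have htsfun : (fun ω => ∑' n, C n ω) = fun ω => YT ω - h (x (T ω) ω) := by
    funext ω; rw [hYT]; ring
  have htsint : Integrable (fun ω => ∑' n, C n ω) P := by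
    rw [htsfun]; exact hYTint.sub hhTint
  refine ⟨htsint, ?_⟩
  have hKle : ∫ ω, h (x (T ω) ω) ∂P ≤ K' := by
    have := integral_mono_ae hhTint (integrable_const K') hK'
    simpa using this
  have hsplit : ∫ ω, (∑' n, C n ω) ∂P
      = ∫ ω, YT ω ∂P - ∫ ω, h (x (T ω) ω) ∂P := by
    rw [htsfun, integral_sub hYTint hhTint]
  rw [hsplit]
  linarith
end
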